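/- For every k ≥ 2, the reduced word of g_k has length exactly 3 + (k−2)·2^{k−1}; that is, g_k is a product of 3 + (k−2)·2^{k−1} generators and inverses of generators, and no shorter such product represents g_k. -/

import Mathlib

/-- The descending product of generators `x_{k-2} · x_{k-3} ⋯ x₁`. -/
def hangDesc (k : ℕ) : FreeGroup ℕ :=
  ((List.range (k - 2)).map fun j => FreeGroup.of (k - 2 - j)).prod

/-- The word substituted for `x_{k-1}` when passing from `g_k` to `g_{k+1}`:
`x_k⁻¹ · x₀⁻¹ · x₁⁻¹ ⋯ x_{k-2}⁻¹ · x_{k-1} · x_{k-2} ⋯ x₁ · x₀ · x_k`. -/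
def hangSub (k : ℕ) : FreeGroup ℕ :=
  (FreeGroup.of k)⁻¹ * (FreeGroup.of 0)⁻¹ * (hangDesc k)⁻¹ *
    FreeGroup.of (k - 1) * hangDesc k * FreeGroup.of 0 * FreeGroup.of k

/-- The substitution homomorphism `φ_k`, sending the generator `x_{k-1}` to the
word `hangSub k` and fixing every other generator. -/
def hangPhi (k : ℕ) : FreeGroup ℕ →* FreeGroup ℕ :=
  FreeGroup.lift fun m => if m = k - 1 then hangSub k else FreeGroup.of m

/-- The picture-hanging elements `g_k ∈ FreeGroup ℕ`:
`g₂ = x₀·x₁⁻¹·x₀⁻¹`, `g₃ = x₀·x₂⁻¹·x₀⁻¹·x₁⁻¹·x₀·x₂·x₀⁻¹`, and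
`g_{k+1} = φ_k (g_k)` for `k ≥ 3`. -/
def hangG : ℕ → FreeGroup ℕ
  | 0 => 1
  | 1 => 1
  | 2 => FreeGroup.of 0 * (FreeGroup.of 1)⁻¹ * (FreeGroup.of 0)⁻¹
  | 3 => FreeGroup.of 0 * (FreeGroup.of 2)⁻¹ * (FreeGroup.of 0)⁻¹ *
      (FreeGroup.of 1)⁻¹ * FreeGroup.of 0 * FreeGroup.of 2 * (FreeGroup.of 0)⁻¹
  | k + 4 => hangPhi (k + 3) (hangG (k + 3))

namespace Hang15

abbrev Ltr := ℕ × Bool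

/-- ascending inverse block `x₀⁻¹ x₁⁻¹ ⋯ x_{k-2}⁻¹` -/
def cA (k : ℕ) : List Ltr := (List.range (k-1)).map fun j => (j, false)
/-- descending block `x_{k-2} ⋯ x₁ x₀` -/
def cD (k : ℕ) : List Ltr := (List.range (k-1)).map fun j => (k-2-j, true)

def chunk (k : ℕ) (b : Bool) : List Ltr :=
  ((k,false) :: cA k) ++ ((k-1,b) :: cD k) ++ [(k,true)]

def subst (k : ℕ) (p : Ltr) : List Ltr := if p.1 = k-1 then chunk k p.2 else [p]

def W : ℕ → List Ltr
  | 0 => []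
  | 1 => []
  | 2 => [(0,true),(1,false),(0,false)]
  | 3 => [(0,true),(2,false),(0,false),(1,false),(0,true),(2,true),(0,false)]
  | k + 4 => (W (k+3)).flatMap (subst (k+3))

lemma mk_eq_prod (L : List Ltr) :
    FreeGroup.mk L = (L.map fun x => bif x.2 then FreeGroup.of x.1 else (FreeGroup.of x.1)⁻¹).prod := by
  conv_lhs => rw [← FreeGroup.lift_of_apply (FreeGroup.mk L)]
  exact FreeGroup.lift_mk

lemma mk_single_true (m : ℕ) : FreeGroup.mk [(m,true)] = FreeGroup.of m := rfl

lemma mk_single_false (m : ℕ) : FreeGroup.mk [(m,false)] = (FreeGroup.of m)⁻¹ := by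
  simp [mk_eq_prod]

lemma mk_cD (k : ℕ) (hk : 2 ≤ k) : FreeGroup.mk (cD k) = hangDesc k * FreeGroup.of 0 := by
  obtain ⟨m, rfl⟩ : ∃ m, k = m + 2 := ⟨k - 2, by omega⟩
  rw [mk_eq_prod, cD, hangDesc]
  simp only [show m+2-1 = m+1 from rfl, show m+2-2 = m from rfl, List.range_succ,
    List.map_append, List.map_map, List.prod_append]
  have h1 : (List.map ((fun (x : Ltr) => bif x.2 then FreeGroup.of x.1 else (FreeGroup.of x.1)⁻¹) ∘ fun j => (m - j, true))
      (List.range m)).prod = (List.map (fun j => (FreeGroup.of (m - j) : FreeGroup ℕ)) (List.range m)).prod := by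
    congr 1
  rw [h1]
  simp

lemma AD (n : ℕ) :
    (((List.range n).map fun j => ((FreeGroup.of j : FreeGroup ℕ))⁻¹).prod) *
      (((List.range n).map fun j => (FreeGroup.of (n-1-j) : FreeGroup ℕ)).prod) = 1 := by
  induction n with
  | zero => simp
  | succ n ih =>
    have h2 : ((List.range (n+1)).map fun j => (FreeGroup.of (n+1-1-j) : FreeGroup ℕ)).prod
        = FreeGroup.of n * ((List.range n).map fun j => (FreeGroup.of (n-1-j) : FreeGroup ℕ)).prod := by
      rw [List.range_succ_eq_map]
      simp only [List.map_cons, List.prod_cons, List.map_map, Nat.add_sub_cancel, Nat.sub_zero]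
      congr 2
      apply List.map_congr_left
      intro j hj
      simp only [Function.comp_apply, Nat.succ_eq_add_one]
      congr 1
      omega
    rw [h2]
    conv_lhs => rw [List.range_succ]
    rw [List.map_append, List.prod_append]
    simp only [List.map_cons, List.map_nil, List.prod_cons, List.prod_nil, mul_one]
    calc (List.map (fun j => ((FreeGroup.of j : FreeGroup ℕ))⁻¹) (List.range n)).prod * (FreeGroup.of n)⁻¹ *
        (FreeGroup.of n * (List.map (fun j => (FreeGroup.of (n-1-j) : FreeGroup ℕ)) (List.range n)).prod)
        = (List.map (fun j => ((FreeGroup.of j : FreeGroup ℕ))⁻¹) (List.range n)).prod *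
          (List.map (fun j => (FreeGroup.of (n-1-j) : FreeGroup ℕ)) (List.range n)).prod := by group
      _ = 1 := ih

lemma mk_cA (k : ℕ) (hk : 2 ≤ k) : FreeGroup.mk (cA k) = (hangDesc k * FreeGroup.of 0)⁻¹ := by
  rw [← mk_cD k hk, eq_inv_iff_mul_eq_one]
  have hA : FreeGroup.mk (cA k) = ((List.range (k-1)).map fun j => ((FreeGroup.of j : FreeGroup ℕ))⁻¹).prod := by
    rw [mk_eq_prod, cA, List.map_map]; congr 1
  have hD : FreeGroup.mk (cD k) = ((List.range (k-1)).map fun j => (FreeGroup.of ((k-1)-1-j) : FreeGroup ℕ)).prod := by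
    rw [mk_eq_prod, cD, List.map_map]
    congr 1
  rw [hA, hD]
  exact AD (k-1)



lemma mk_chunk (k : ℕ) (hk : 2 ≤ k) (b : Bool) :
    FreeGroup.mk (chunk k b) = bif b then hangSub k else (hangSub k)⁻¹ := by
  have h : FreeGroup.mk (chunk k b)
      = FreeGroup.mk [(k,false)] * FreeGroup.mk (cA k) * (FreeGroup.mk [(k-1,b)] * FreeGroup.mk (cD k))
        * FreeGroup.mk [(k,true)] := by
    rw [chunk, show ((k,false) :: cA k) = [(k,false)] ++ cA k from rfl,
      show ((k-1,b) :: cD k) = [(k-1,b)] ++ cD k from rfl]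
    simp only [FreeGroup.mul_mk, List.append_assoc]
  rw [h, mk_single_true, mk_single_false, mk_cA k hk, mk_cD k hk]
  cases b with
  | true =>
    rw [mk_single_true]
    simp only [hangSub, cond_true, mul_inv_rev]
    group
  | false =>
    rw [mk_single_false]
    simp only [hangSub, cond_false, mul_inv_rev, inv_inv]
    group

lemma hangPhi_of (k m : ℕ) :
    hangPhi k (FreeGroup.of m) = if m = k-1 then hangSub k else FreeGroup.of m :=
  FreeGroup.lift_apply_of

lemma mk_subst (k : ℕ) (hk : 2 ≤ k) (p : Ltr) :
    FreeGroup.mk (subst k p) = hangPhi k (FreeGroup.mk [p]) := by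
  obtain ⟨m, b⟩ := p
  show FreeGroup.mk (if m = k-1 then chunk k b else [(m,b)]) = _
  by_cases hm : m = k-1
  · subst hm
    rw [if_pos rfl, mk_chunk k hk]
    cases b
    · rw [mk_single_false, map_inv, hangPhi_of, if_pos rfl]
      rfl
    · rw [mk_single_true, hangPhi_of, if_pos rfl]
      rfl
  · rw [if_neg hm]
    cases b
    · rw [mk_single_false, map_inv, hangPhi_of, if_neg hm]
    · rw [mk_single_true, hangPhi_of, if_neg hm]

lemma hangPhi_mk (k : ℕ) (hk : 2 ≤ k) (L : List Ltr) :
    hangPhi k (FreeGroup.mk L) = FreeGroup.mk (L.flatMap (subst k)) := by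
  induction L with
  | nil =>
    show hangPhi k (FreeGroup.mk []) = FreeGroup.mk []
    rw [show (FreeGroup.mk [] : FreeGroup ℕ) = 1 from rfl, map_one]
  | cons p L ih =>
    rw [List.flatMap_cons, show (p :: L) = [p] ++ L from rfl, ← FreeGroup.mul_mk, map_mul, ih, ← mk_subst k hk p, FreeGroup.mul_mk]

/-! ### Reducedness machinery -/

theorem _root_.List.chain'_cons' {α : Type*} {R : α → α → Prop} {x : α} {l : List α} :
    List.Chain' R (x :: l) ↔ (∀ y ∈ l.head?, R x y) ∧ List.Chain' R l := List.isChain_cons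
theorem _root_.List.chain'_cons {α : Type*} {R : α → α → Prop} {x y : α} {l : List α} :
    List.Chain' R (x :: y :: l) ↔ R x y ∧ List.Chain' R (y :: l) := List.isChain_cons_cons
@[simp] theorem _root_.List.chain'_nil {α : Type*} {R : α → α → Prop} : List.Chain' R [] :=
  List.isChain_nil
@[simp] theorem _root_.List.chain'_singleton {α : Type*} {R : α → α → Prop} (a : α) :
    List.Chain' R [a] := List.isChain_singleton a
theorem _root_.List.chain'_append {α : Type*} {R : α → α → Prop} {l₁ l₂ : List α} :
    List.Chain' R (l₁ ++ l₂) ↔ List.Chain' R l₁ ∧ List.Chain' R l₂ ∧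
      ∀ x ∈ l₁.getLast?, ∀ y ∈ l₂.head?, R x y := List.isChain_append
theorem _root_.List.Pairwise.chain' {α : Type*} {R : α → α → Prop} {l : List α}
    (p : List.Pairwise R l) : List.Chain' R l := p.isChain

def Rk (s : ℕ) (a b : Ltr) : Prop := ¬(a.1 = b.1 ∧ a.2 = !b.2) ∧ ¬(a.1 = s ∧ b.1 = s)

instance (s : ℕ) : DecidableRel (Rk s) := fun a b =>
  inferInstanceAs (Decidable (¬(a.1 = b.1 ∧ a.2 = !b.2) ∧ ¬(a.1 = s ∧ b.1 = s)))

lemma reduced_of_chain' (L : List Ltr)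
    (h : L.Chain' fun a b => ¬(a.1 = b.1 ∧ a.2 = !b.2)) : FreeGroup.reduce L = L := by
  induction L with
  | nil => rfl
  | cons x L ih =>
    rw [FreeGroup.reduce.cons, ih (List.chain'_cons'.1 h).2]
    cases L with
    | nil => rfl
    | cons y t =>
      have hxy := (List.chain'_cons.1 h).1
      show (if x.1 = y.1 ∧ x.2 = !y.2 then t else x :: y :: t) = x :: y :: t
      rw [if_neg hxy]

lemma chain'_and_mem {α : Type*} {R : α → α → Prop} {P : α → Prop} :
    ∀ {l : List α}, List.Chain' R l → (∀ x ∈ l, P x) →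
      List.Chain' (fun a b => R a b ∧ P a ∧ P b) l
  | [], _, _ => List.chain'_nil
  | [_], _, _ => List.chain'_singleton _
  | a :: b :: l, h, hP => by
    rw [List.chain'_cons] at h ⊢
    exact ⟨⟨h.1, hP a (by simp), hP b (by simp)⟩,
      chain'_and_mem h.2 fun x hx => hP x (List.mem_cons_of_mem a hx)⟩

lemma chain'_flatMap {α β : Type*} {R : α → α → Prop} {R' : β → β → Prop} {f : α → List β}
    (hne : ∀ a, f a ≠ [])
    (hint : ∀ a, List.Chain' R' (f a))
    (hjun : ∀ a b, R a b → ∀ x ∈ (f a).getLast?, ∀ y ∈ (f b).head?, R' x y) :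
    ∀ L : List α, List.Chain' R L → List.Chain' R' (L.flatMap f)
  | [], _ => by simp
  | a :: L, h => by
    rw [List.flatMap_cons]
    refine List.chain'_append.2 ⟨hint a,
      chain'_flatMap hne hint hjun L (List.chain'_cons'.1 h).2, ?_⟩
    intro x hx y hy
    cases L with
    | nil => simp at hy
    | cons b L' =>
      rw [List.flatMap_cons] at hy
      cases hfb : f b with
      | nil => exact absurd hfb (hne b)
      | cons z t =>
        rw [hfb, List.cons_append, List.head?_cons, Option.mem_some_iff] at hy
        subst hy
        exact hjun a b (List.chain'_cons.1 h).1 x hx z (by rw [hfb]; rfl)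

/-! ### chunk structure -/

lemma chunk_head (k : ℕ) (b : Bool) : (chunk k b).head? = some (k, false) := rfl

lemma chunk_getLast (k : ℕ) (b : Bool) : (chunk k b).getLast? = some (k, true) :=
  List.getLast?_concat

lemma mem_chunk {k : ℕ} {b : Bool} {p : Ltr} (hp : p ∈ chunk k b) : p.1 ≤ k := by
  simp only [chunk, cA, cD, List.mem_append, List.mem_cons, List.mem_map,
    List.mem_range, List.mem_singleton, List.not_mem_nil, or_false] at hp
  rcases hp with ((rfl | ⟨j, hj, rfl⟩) | (rfl | ⟨j, hj, rfl⟩)) | rfl <;> dsimp only <;> omega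

lemma chain'_chunk (k : ℕ) (hk : 3 ≤ k) (b : Bool) : List.Chain' (Rk k) (chunk k b) := by
  obtain ⟨m, rfl⟩ : ∃ m, k = m + 3 := ⟨k - 3, by omega⟩
  have hAeq : cA (m+3) = ((List.range (m+1)).map fun j => ((j,false) : Ltr)) ++ [(m+1,false)] := by
    rw [cA, show m+3-1 = (m+1)+1 from rfl, List.range_succ, List.map_append]
    rfl
  have hDeq : cD (m+3) = ((List.range (m+1)).map fun j => ((m+1-j,true) : Ltr)) ++ [(0,true)] := by
    rw [cD, show m+3-1 = (m+1)+1 from rfl, show m+3-2 = m+1 from rfl, List.range_succ,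
      List.map_append]
    simp
  have hA : List.Chain' (Rk (m+3)) (cA (m+3)) := by
    refine List.Pairwise.chain' (List.pairwise_of_forall_mem_list ?_)
    rintro a ha b hb
    simp only [cA, List.mem_map, List.mem_range] at ha hb
    obtain ⟨i, hi, rfl⟩ := ha
    obtain ⟨j, hj, rfl⟩ := hb
    constructor
    · rintro ⟨h1, h2⟩
      simp at h2
    · rintro ⟨h1, h2⟩
      dsimp only at h1 h2
      omega
  have hD : List.Chain' (Rk (m+3)) (cD (m+3)) := by
    refine List.Pairwise.chain' (List.pairwise_of_forall_mem_list ?_)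
    rintro a ha b hb
    simp only [cD, List.mem_map, List.mem_range] at ha hb
    obtain ⟨i, hi, rfl⟩ := ha
    obtain ⟨j, hj, rfl⟩ := hb
    constructor
    · rintro ⟨h1, h2⟩
      simp at h2
    · rintro ⟨h1, h2⟩
      dsimp only at h1 h2
      omega
  have hAhead : (cA (m+3)).head? = some (0, false) := by
    rw [cA, show m+3-1 = (m+1)+1 from rfl, List.range_succ_eq_map]
    rfl
  have hDhead : (cD (m+3)).head? = some (m+1, true) := by
    rw [cD, show m+3-1 = (m+1)+1 from rfl, List.range_succ_eq_map]
    rfl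
  have h1 : (((m+3,false) : Ltr) :: cA (m+3)).getLast? = some (m+1, false) := by
    rw [hAeq, ← List.cons_append]
    exact List.getLast?_concat
  have h2 : (((m+2,b) : Ltr) :: cD (m+3)).getLast? = some (0, true) := by
    rw [hDeq, ← List.cons_append]
    exact List.getLast?_concat
  show List.Chain' (Rk (m+3))
    ((((m+3,false) : Ltr) :: cA (m+3)) ++ (((m+2,b) : Ltr) :: cD (m+3)) ++ [((m+3,true) : Ltr)])
  refine List.chain'_append.2 ⟨List.chain'_append.2 ⟨?_, ?_, ?_⟩, List.chain'_singleton _, ?_⟩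
  · refine List.chain'_cons'.2 ⟨?_, hA⟩
    intro y hy
    rw [hAhead, Option.mem_some_iff] at hy
    subst hy
    exact ⟨by rintro ⟨u, v⟩; dsimp only at u; omega, by rintro ⟨u, v⟩; dsimp only at v; omega⟩
  · refine List.chain'_cons'.2 ⟨?_, hD⟩
    intro y hy
    rw [hDhead, Option.mem_some_iff] at hy
    subst hy
    exact ⟨by rintro ⟨u, v⟩; dsimp only at u; omega, by rintro ⟨u, v⟩; dsimp only at u; omega⟩
  · intro x hx y hy
    rw [h1, Option.mem_some_iff] at hx
    rw [List.head?_cons, Option.mem_some_iff] at hy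
    subst hx; subst hy
    exact ⟨by rintro ⟨u, v⟩; dsimp only at u; omega, by rintro ⟨u, v⟩; dsimp only at u; omega⟩
  · intro x hx y hy
    rw [List.getLast?_append_of_ne_nil _ (by simp), h2, Option.mem_some_iff] at hx
    rw [List.head?_cons, Option.mem_some_iff] at hy
    subst hx; subst hy
    exact ⟨by rintro ⟨u, v⟩; dsimp only at u; omega, by rintro ⟨u, v⟩; dsimp only at u; omega⟩

/-! ### counting -/

lemma length_chunk (k : ℕ) (hk : 2 ≤ k) (b : Bool) : (chunk k b).length = 2*k + 1 := by
  simp [chunk, cA, cD]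
  omega

lemma countP_chunk (k : ℕ) (hk : 1 ≤ k) (b : Bool) :
    ((chunk k b).countP fun p => p.1 == k) = 2 := by
  have hA : ((cA k).countP fun p => p.1 == k) = 0 := by
    rw [List.countP_eq_zero]
    intro p hp
    simp only [cA, List.mem_map, List.mem_range] at hp
    obtain ⟨j, hj, rfl⟩ := hp
    simp; omega
  have hD : ((cD k).countP fun p => p.1 == k) = 0 := by
    rw [List.countP_eq_zero]
    intro p hp
    simp only [cD, List.mem_map, List.mem_range] at hp
    obtain ⟨j, hj, rfl⟩ := hp
    simp; omega
  rw [chunk]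
  rw [List.countP_append, List.countP_append, List.countP_cons, List.countP_cons, hA, hD]
  simp
  omega

lemma length_flatMap_subst (k : ℕ) (hk : 2 ≤ k) :
    ∀ L : List Ltr,
      (L.flatMap (subst k)).length = L.length + 2*k * (L.countP fun p => p.1 == k-1)
  | [] => by simp
  | p :: L => by
    rw [List.flatMap_cons, List.length_append, length_flatMap_subst k hk L,
      List.countP_cons, List.length_cons, subst]
    by_cases hp : p.1 = k - 1
    · rw [if_pos hp, length_chunk k hk]
      simp [hp]
      ring
    · rw [if_neg hp]
      simp [hp]
      ring

lemma countP_flatMap_subst (k : ℕ) (hk : 1 ≤ k) :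
    ∀ L : List Ltr, (∀ p ∈ L, p.1 < k) →
      ((L.flatMap (subst k)).countP fun p => p.1 == k) = 2 * (L.countP fun p => p.1 == k-1)
  | [], _ => by simp
  | p :: L, hL => by
    rw [List.flatMap_cons, List.countP_append,
      countP_flatMap_subst k hk L (fun q hq => hL q (List.mem_cons_of_mem p hq)),
      List.countP_cons, subst]
    have hpk : p.1 < k := hL p (List.mem_cons_self)
    by_cases hp : p.1 = k - 1
    · rw [if_pos hp, countP_chunk k hk]
      simp [hp]
      ring
    · rw [if_neg hp]
      have : ¬ (p.1 = k) := by omega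
      simp [hp, this]

lemma mem_flatMap_subst {k : ℕ} {L : List Ltr} (hL : ∀ p ∈ L, p.1 < k) :
    ∀ p ∈ L.flatMap (subst k), p.1 < k + 1 := by
  intro p hp
  rw [List.mem_flatMap] at hp
  obtain ⟨q, hq, hpq⟩ := hp
  by_cases hq1 : q.1 = k-1
  · rw [subst, if_pos hq1] at hpq
    exact lt_of_le_of_lt (mem_chunk hpq) (by omega)
  · rw [subst, if_neg hq1, List.mem_singleton] at hpq
    subst hpq
    have := hL _ hq
    omega

lemma main (m : ℕ) :
    FreeGroup.mk (W (m+3)) = hangG (m+3) ∧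
    List.Chain' (Rk (m+2)) (W (m+3)) ∧
    (∀ p ∈ W (m+3), p.1 < m+3) ∧
    ((W (m+3)).countP fun p => p.1 == m+2) = 2^(m+1) ∧
    (W (m+3)).length = 3 + (m+1) * 2^(m+2) := by
  induction m with
  | zero =>
    refine ⟨by decide, ?_, by decide, by decide, by decide⟩
    show List.Chain' (Rk 2) [(0,true),(2,false),(0,false),(1,false),(0,true),(2,true),(0,false)]
    simp only [List.chain'_cons, List.chain'_singleton, Rk, and_true]
    decide
  | succ n ih =>
    obtain ⟨hmk, hch, hmem, hcnt, hlen⟩ := ih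
    have hW : W (n+1+3) = (W (n+3)).flatMap (subst (n+3)) := rfl
    refine ⟨?_, ?_, ?_, ?_, ?_⟩
    · show FreeGroup.mk (W (n+1+3)) = hangPhi (n+3) (hangG (n+3))
      rw [hW, ← hangPhi_mk (n+3) (by omega), hmk]
    · show List.Chain' (Rk (n+3)) (W (n+1+3))
      rw [hW]
      refine chain'_flatMap (R := fun a b => Rk (n+2) a b ∧ a.1 < n+3 ∧ b.1 < n+3)
        ?_ ?_ ?_ _ (chain'_and_mem hch hmem)
      · intro a
        rw [subst]
        split
        · simp [chunk]
        · simp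
      · intro a
        rw [subst]
        split
        · exact chain'_chunk (n+3) (by omega) _
        · exact List.chain'_singleton _
      · rintro a c ⟨⟨hred, hnn⟩, ha, hc⟩ x hx y hy
        rw [subst] at hx hy
        by_cases ha1 : a.1 = n+3-1
        · rw [if_pos ha1, chunk_getLast, Option.mem_some_iff] at hx
          subst hx
          by_cases hc1 : c.1 = n+3-1
          · exact absurd ⟨ha1, hc1⟩ hnn
          · rw [if_neg hc1, List.head?_cons, Option.mem_some_iff] at hy
            subst hy
            refine ⟨?_, ?_⟩
            · rintro ⟨u, v⟩
              omega
            · rintro ⟨u, v⟩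
              omega
        · rw [if_neg ha1, List.getLast?_singleton, Option.mem_some_iff] at hx
          subst hx
          by_cases hc1 : c.1 = n+3-1
          · rw [if_pos hc1, chunk_head, Option.mem_some_iff] at hy
            subst hy
            refine ⟨?_, ?_⟩
            · rintro ⟨u, v⟩
              omega
            · rintro ⟨u, v⟩
              omega
          · rw [if_neg hc1, List.head?_cons, Option.mem_some_iff] at hy
            subst hy
            refine ⟨hred, ?_⟩
            rintro ⟨u, v⟩
            omega
    · show ∀ p ∈ W (n+1+3), p.1 < n+1+3
      rw [hW]
      exact mem_flatMap_subst hmem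
    · show ((W (n+1+3)).countP fun p => p.1 == n+3) = 2^(n+2)
      rw [hW, countP_flatMap_subst (n+3) (by omega) _ hmem]
      have hcnt' : ((W (n+3)).countP fun p => p.1 == n+3-1) = 2^(n+1) := hcnt
      rw [hcnt', pow_succ]
      ring
    · show (W (n+1+3)).length = 3 + (n+2) * 2^(n+3)
      rw [hW, length_flatMap_subst (n+3) (by omega)]
      have hcnt' : ((W (n+3)).countP fun p => p.1 == n+3-1) = 2^(n+1) := hcnt
      rw [hcnt', hlen, show n+2 = (n+1)+1 from rfl, show n+3 = (n+2)+1 from rfl, pow_succ, pow_succ]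
      ring

end Hang15


/-- The reduced word of `g_k` has length exactly `3 + (k-2)·2^(k-1)`; equivalently,
this is the minimal number of generators and inverses of generators needed to
express `g_k`. -/
theorem stmt15 (k : ℕ) (hk : 2 ≤ k) :
    (hangG k).toWord.length = 3 + (k - 2) * 2 ^ (k - 1) := by
  match k, hk with
  | 2, _ => decide
  | (m+3), _ =>
    obtain ⟨hmk, hch, hmem, hcnt, hlen⟩ := Hang15.main m
    have hW : (hangG (m+3)).toWord = Hang15.W (m+3) := by
      rw [← hmk, FreeGroup.toWord_mk, Hang15.reduced_of_chain']
      exact hch.imp fun a b h => h.1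
    rw [hW, hlen, show m+3-2 = m+1 from rfl, show m+3-1 = m+2 from rfl]
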